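/- Let (p,q) ∈ ℤ^n × ℕ with gcd(p,q) = 1, let r = gcd(p), and let γ_p ∈ SL_n(ℤ) with p = r·e_n·γ_p. Let f : ℝ^n → ℂ be bounded and compactly supported. Then for every g ∈ SL_n(ℝ), the Siegel transform of f at the affine lattice Λ = (ℤ^n + p/q)·g satisfies f̂(Λ) = Σ_{k ≥ 1, gcd(k,q)=1} Θ_{f_{k/q}}^{n,q}(τ_{[k·r̄]}·γ_p·g), where f_{k/q}(x) = f(k·x/q), r̄ is an inverse of r mod q, and the sum has only finitely many nonzero terms. -/

import Mathlib

open MeasureTheory Matrix Filter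
open scoped ENNReal

noncomputable section

abbrev SLR (n : ℕ) := Matrix.SpecialLinearGroup (Fin n) ℝ
abbrev SLZ (n : ℕ) := Matrix.SpecialLinearGroup (Fin n) ℤ

instance SLRTop (n : ℕ) : TopologicalSpace (SLR n) :=
  inferInstanceAs (TopologicalSpace {A : Matrix (Fin n) (Fin n) ℝ // A.det = 1})

def ιR (n : ℕ) : SLZ n →* SLR n := Matrix.SpecialLinearGroup.map (Int.castRingHom ℝ)

def SLZsub (n : ℕ) : Subgroup (SLR n) := (ιR n).range

def en (n : ℕ) : Fin n → ℤ := fun i => if (i : ℕ) = n - 1 then 1 else 0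
def enR (n : ℕ) : Fin n → ℝ := fun i => if (i : ℕ) = n - 1 then 1 else 0
def enM (n q : ℕ) : Fin n → ZMod q := fun i => if (i : ℕ) = n - 1 then 1 else 0

def ιM (n q : ℕ) : SLZ n →* Matrix.SpecialLinearGroup (Fin n) (ZMod q) :=
  Matrix.SpecialLinearGroup.map (Int.castRingHom (ZMod q))

def Gamma1 (n q : ℕ) : Subgroup (SLZ n) where
  carrier := {γ | Matrix.vecMul (enM n q) ((ιM n q γ : Matrix.SpecialLinearGroup (Fin n) (ZMod q)) : Matrix (Fin n) (Fin n) (ZMod q)) = enM n q}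
  one_mem' := by simp
  mul_mem' := by
    intro a b ha hb
    have ha' : Matrix.vecMul (enM n q) ((ιM n q a : Matrix.SpecialLinearGroup (Fin n) (ZMod q)) : Matrix (Fin n) (Fin n) (ZMod q)) = enM n q := ha
    have hb' : Matrix.vecMul (enM n q) ((ιM n q b : Matrix.SpecialLinearGroup (Fin n) (ZMod q)) : Matrix (Fin n) (Fin n) (ZMod q)) = enM n q := hb
    show Matrix.vecMul (enM n q) ((ιM n q (a * b) : Matrix.SpecialLinearGroup (Fin n) (ZMod q)) : Matrix (Fin n) (Fin n) (ZMod q)) = enM n q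
    rw [_root_.map_mul, Matrix.SpecialLinearGroup.coe_mul, ← Matrix.vecMul_vecMul, ha', hb']
  inv_mem' := by
    intro a ha
    have ha' : Matrix.vecMul (enM n q) ((ιM n q a : Matrix.SpecialLinearGroup (Fin n) (ZMod q)) : Matrix (Fin n) (Fin n) (ZMod q)) = enM n q := ha
    show Matrix.vecMul (enM n q) ((ιM n q a⁻¹ : Matrix.SpecialLinearGroup (Fin n) (ZMod q)) : Matrix (Fin n) (Fin n) (ZMod q)) = enM n q
    rw [_root_.map_inv]
    have key : ((ιM n q a : Matrix.SpecialLinearGroup (Fin n) (ZMod q)) : Matrix (Fin n) (Fin n) (ZMod q)) *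
        (((ιM n q a)⁻¹ : Matrix.SpecialLinearGroup (Fin n) (ZMod q)) : Matrix (Fin n) (Fin n) (ZMod q)) = 1 := by
      rw [← Matrix.SpecialLinearGroup.coe_mul, mul_inv_cancel]
      simp
    calc Matrix.vecMul (enM n q) (((ιM n q a)⁻¹ : Matrix.SpecialLinearGroup (Fin n) (ZMod q)) : Matrix (Fin n) (Fin n) (ZMod q))
        = Matrix.vecMul (Matrix.vecMul (enM n q) ((ιM n q a : Matrix.SpecialLinearGroup (Fin n) (ZMod q)) : Matrix (Fin n) (Fin n) (ZMod q))) (((ιM n q a)⁻¹ : Matrix.SpecialLinearGroup (Fin n) (ZMod q)) : Matrix (Fin n) (Fin n) (ZMod q)) := by rw [ha']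
      _ = Matrix.vecMul (enM n q) (((ιM n q a : Matrix.SpecialLinearGroup (Fin n) (ZMod q)) : Matrix (Fin n) (Fin n) (ZMod q)) * (((ιM n q a)⁻¹ : Matrix.SpecialLinearGroup (Fin n) (ZMod q)) : Matrix (Fin n) (Fin n) (ZMod q))) := Matrix.vecMul_vecMul _ _ _
      _ = enM n q := by rw [key, Matrix.vecMul_one]

def LZ (n : ℕ) : Subgroup (SLZ n) where
  carrier := {γ | Matrix.vecMul (en n) ((γ : SLZ n) : Matrix (Fin n) (Fin n) ℤ) = en n}
  one_mem' := by simp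
  mul_mem' := by
    intro a b ha hb
    have ha' : Matrix.vecMul (en n) ((a : SLZ n) : Matrix (Fin n) (Fin n) ℤ) = en n := ha
    have hb' : Matrix.vecMul (en n) ((b : SLZ n) : Matrix (Fin n) (Fin n) ℤ) = en n := hb
    show Matrix.vecMul (en n) ((a * b : SLZ n) : Matrix (Fin n) (Fin n) ℤ) = en n
    rw [Matrix.SpecialLinearGroup.coe_mul, ← Matrix.vecMul_vecMul, ha', hb']
  inv_mem' := by
    intro a ha
    have ha' : Matrix.vecMul (en n) ((a : SLZ n) : Matrix (Fin n) (Fin n) ℤ) = en n := ha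
    show Matrix.vecMul (en n) ((a⁻¹ : SLZ n) : Matrix (Fin n) (Fin n) ℤ) = en n
    have key : ((a : Matrix (Fin n) (Fin n) ℤ)) * ((a⁻¹ : SLZ n) : Matrix (Fin n) (Fin n) ℤ) = 1 := by
      rw [← Matrix.SpecialLinearGroup.coe_mul, mul_inv_cancel]
      simp
    calc Matrix.vecMul (en n) ((a⁻¹ : SLZ n) : Matrix (Fin n) (Fin n) ℤ)
        = Matrix.vecMul (Matrix.vecMul (en n) (a : Matrix (Fin n) (Fin n) ℤ)) ((a⁻¹ : SLZ n) : Matrix (Fin n) (Fin n) ℤ) := by rw [ha']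
      _ = Matrix.vecMul (en n) ((a : Matrix (Fin n) (Fin n) ℤ) * ((a⁻¹ : SLZ n) : Matrix (Fin n) (Fin n) ℤ)) := Matrix.vecMul_vecMul _ _ _
      _ = en n := by rw [key, Matrix.vecMul_one]

/-- The map from the coset space `(Γ ∩ L_n)\Γ` to `ℤⁿ` induced by `γ ↦ e_n·γ`. -/
def cosetVec (n : ℕ) (Γ : Subgroup (SLZ n)) :
    Quotient (QuotientGroup.rightRel ((LZ n).subgroupOf Γ)) → (Fin n → ℤ) :=
  fun c => Quotient.liftOn c
    (fun γ => Matrix.vecMul (en n) (((γ : Γ) : SLZ n) : Matrix (Fin n) (Fin n) ℤ))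
    (by
      intro a b hab
      have hab' : (b * a⁻¹ : Γ) ∈ (LZ n).subgroupOf Γ := QuotientGroup.rightRel_apply.mp hab
      have h : Matrix.vecMul (en n) (((b * a⁻¹ : Γ) : SLZ n) : Matrix (Fin n) (Fin n) ℤ) = en n :=
        Subgroup.mem_subgroupOf.mp hab'
      show Matrix.vecMul (en n) (((a : Γ) : SLZ n) : Matrix (Fin n) (Fin n) ℤ)
          = Matrix.vecMul (en n) (((b : Γ) : SLZ n) : Matrix (Fin n) (Fin n) ℤ)
      have hb : (((b : Γ) : SLZ n) : Matrix (Fin n) (Fin n) ℤ)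
          = (((b * a⁻¹ : Γ) : SLZ n) : Matrix (Fin n) (Fin n) ℤ) * (((a : Γ) : SLZ n) : Matrix (Fin n) (Fin n) ℤ) := by
        rw [← Matrix.SpecialLinearGroup.coe_mul]
        congr 1
        simp only [Subgroup.coe_mul, InvMemClass.coe_inv]
        group
        try rfl
      rw [hb, ← Matrix.vecMul_vecMul, h])

/-- The incomplete Eisenstein series `Θ_f^Γ`: the sum of `f(e_n·γ·g)` over the
coset space `(Γ ∩ L_n)\Γ`. -/
def Theta (n : ℕ) (Γ : Subgroup (SLZ n)) (f : (Fin n → ℝ) → ℂ) (g : SLR n) : ℂ :=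
  ∑' c : Quotient (QuotientGroup.rightRel ((LZ n).subgroupOf Γ)),
    f (Matrix.vecMul (fun i => ((cosetVec n Γ c) i : ℝ)) (g : Matrix (Fin n) (Fin n) ℝ))
/-- The real stabilizer `L_n ≤ SL_n(ℝ)` of `e_n`. -/
def LR (n : ℕ) : Subgroup (SLR n) where
  carrier := {g | Matrix.vecMul (enR n) ((g : SLR n) : Matrix (Fin n) (Fin n) ℝ) = enR n}
  one_mem' := by simp
  mul_mem' := by
    intro a b ha hb
    have ha' : Matrix.vecMul (enR n) ((a : SLR n) : Matrix (Fin n) (Fin n) ℝ) = enR n := ha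
    have hb' : Matrix.vecMul (enR n) ((b : SLR n) : Matrix (Fin n) (Fin n) ℝ) = enR n := hb
    show Matrix.vecMul (enR n) ((a * b : SLR n) : Matrix (Fin n) (Fin n) ℝ) = enR n
    rw [Matrix.SpecialLinearGroup.coe_mul, ← Matrix.vecMul_vecMul, ha', hb']
  inv_mem' := by
    intro a ha
    have ha' : Matrix.vecMul (enR n) ((a : SLR n) : Matrix (Fin n) (Fin n) ℝ) = enR n := ha
    show Matrix.vecMul (enR n) ((a⁻¹ : SLR n) : Matrix (Fin n) (Fin n) ℝ) = enR n
    have key : ((a : Matrix (Fin n) (Fin n) ℝ)) * ((a⁻¹ : SLR n) : Matrix (Fin n) (Fin n) ℝ) = 1 := by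
      rw [← Matrix.SpecialLinearGroup.coe_mul, mul_inv_cancel]; simp
    calc Matrix.vecMul (enR n) ((a⁻¹ : SLR n) : Matrix (Fin n) (Fin n) ℝ)
        = Matrix.vecMul (Matrix.vecMul (enR n) (a : Matrix (Fin n) (Fin n) ℝ)) ((a⁻¹ : SLR n) : Matrix (Fin n) (Fin n) ℝ) := by rw [ha']
      _ = Matrix.vecMul (enR n) ((a : Matrix (Fin n) (Fin n) ℝ) * ((a⁻¹ : SLR n) : Matrix (Fin n) (Fin n) ℝ)) := Matrix.vecMul_vecMul _ _ _
      _ = enR n := by rw [key, Matrix.vecMul_one]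

/-- The identity component `P_n ≤ SL_n(ℝ)` of the maximal parabolic subgroup fixing the
line spanned by `e_n`: those `g` with `e_n·g = c·e_n` for some `c > 0`. -/
def PR (n : ℕ) : Subgroup (SLR n) where
  carrier := {g | ∃ c : ℝ, 0 < c ∧
    Matrix.vecMul (enR n) ((g : SLR n) : Matrix (Fin n) (Fin n) ℝ) = c • enR n}
  one_mem' := ⟨1, one_pos, by simp⟩
  mul_mem' := by
    rintro a b ⟨c, hc, hca⟩ ⟨d, hd, hdb⟩
    refine ⟨c * d, mul_pos hc hd, ?_⟩
    show Matrix.vecMul (enR n) ((a * b : SLR n) : Matrix (Fin n) (Fin n) ℝ) = (c * d) • enR n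
    rw [Matrix.SpecialLinearGroup.coe_mul, ← Matrix.vecMul_vecMul, hca,
      Matrix.smul_vecMul, hdb, smul_smul]
  inv_mem' := by
    rintro a ⟨c, hc, hca⟩
    refine ⟨c⁻¹, inv_pos.mpr hc, ?_⟩
    show Matrix.vecMul (enR n) ((a⁻¹ : SLR n) : Matrix (Fin n) (Fin n) ℝ) = c⁻¹ • enR n
    have key : ((a : Matrix (Fin n) (Fin n) ℝ)) * ((a⁻¹ : SLR n) : Matrix (Fin n) (Fin n) ℝ) = 1 := by
      rw [← Matrix.SpecialLinearGroup.coe_mul, mul_inv_cancel]; simp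
    have h2 : c • Matrix.vecMul (enR n) ((a⁻¹ : SLR n) : Matrix (Fin n) (Fin n) ℝ) = enR n := by
      rw [← Matrix.smul_vecMul, ← hca, Matrix.vecMul_vecMul, key, Matrix.vecMul_one]
    have h3 := congrArg (fun w => c⁻¹ • w) h2
    simpa [smul_smul, inv_mul_cancel₀ (ne_of_gt hc)] using h3
/-- The Euclidean norm on `ℝⁿ`. -/
def eNorm (n : ℕ) (v : Fin n → ℝ) : ℝ := Real.sqrt (∑ i : Fin n, (v i) ^ 2)

/-- The standard quadratic form `Q₀` of signature `(p₁, n − p₁)`. -/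
def Q0 (n p₁ : ℕ) (v : Fin n → ℝ) : ℝ := ∑ i : Fin n, if (i : ℕ) < p₁ then (v i) ^ 2 else -((v i) ^ 2)

/-- The Riemann zeta value `ζ(n) = Σ_{k ≥ 1} k⁻ⁿ`. -/
def zetaN (n : ℕ) : ℝ := ∑' k : {k : ℕ // 0 < k}, ((k.1 : ℝ))⁻¹ ^ n

/-- `ζ_q(n) = Σ_{k ≥ 1, gcd(k,q) = 1} k⁻ⁿ`. -/
def zetaCop (q n : ℕ) : ℝ := ∑' k : {k : ℕ // 0 < k ∧ Nat.Coprime k q}, ((k.1 : ℝ))⁻¹ ^ n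

/-- The Siegel transform `f̂(Λ) = Σ_{v ∈ Λ∖{0}} f(v)`. -/
def Siegel (n : ℕ) (f : (Fin n → ℝ) → ℂ) (Λ : Set (Fin n → ℝ)) : ℂ :=
  ∑' v : {x : Fin n → ℝ // x ∈ Λ ∧ x ≠ 0}, f v

/-- The affine lattice `(ℤⁿ + α)·g` (row vector action). -/
def affLat (n : ℕ) (α : Fin n → ℝ) (g : SLR n) : Set (Fin n → ℝ) :=
  {x | ∃ v : Fin n → ℤ, x = Matrix.vecMul (fun i => (v i : ℝ) + α i) ((g : SLR n) : Matrix (Fin n) (Fin n) ℝ)}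

/-- The number of points of `Λ` in `A`, valued in `ℝ≥0∞`. -/
def latCount (n : ℕ) (Λ A : Set (Fin n → ℝ)) : ℝ≥0∞ := ∑' _ : ↥(Λ ∩ A), (1 : ℝ≥0∞)

/-- The discrepancy `D(Λ,A) = |#(Λ∩A) − vol(A)|`, valued in `ℝ≥0∞`. -/
def disc (n : ℕ) (Λ A : Set (Fin n → ℝ)) : ℝ≥0∞ :=
  (latCount n Λ A - volume A) + (volume A - latCount n Λ A)

/-- `⟨α⟩`: the sup-norm distance from `α` to `ℤⁿ`. -/
def distZ (n : ℕ) (α : Fin n → ℝ) : ℝ := ⨅ v : Fin n → ℤ, ‖α - fun i => (v i : ℝ)‖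

/-- `m` is a best simultaneous Diophantine approximation denominator of `α`. -/
def IsBestDenom (n : ℕ) (α : Fin n → ℝ) (m : ℕ) : Prop :=
  0 < m ∧ ∀ l : ℕ, 1 ≤ l → l < m →
    distZ n (fun i => (m : ℝ) * α i) < distZ n (fun i => (l : ℝ) * α i)

/-- The defining set of the Diophantine exponent `ω_α`. -/
def omegaSet (n : ℕ) (α : Fin n → ℝ) : Set ℝ :=
  {ν | 0 < ν ∧ ∀ T : ℝ, ∃ t : ℝ, T < t ∧ ∃ m : ℤ, m ≠ 0 ∧ |(m : ℝ)| < t ∧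
    distZ n (fun i => (m : ℝ) * α i) < t ^ (-ν)}

/-- The defining set of the uniform Diophantine exponent `ω̂_α`. -/
def omegaHatSet (n : ℕ) (α : Fin n → ℝ) : Set ℝ :=
  {ν | 0 < ν ∧ ∃ T : ℝ, ∀ t : ℝ, T ≤ t → ∃ m : ℤ, m ≠ 0 ∧ |(m : ℝ)| < t ∧
    distZ n (fun i => (m : ℝ) * α i) < t ^ (-ν)}

/-- The Diophantine exponent `ω_α`. -/
def dioExp (n : ℕ) (α : Fin n → ℝ) : ℝ := sSup (omegaSet n α)

/-- The uniform Diophantine exponent `ω̂_α`. -/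
def dioExpHat (n : ℕ) (α : Fin n → ℝ) : ℝ := sSup (omegaHatSet n α)

/-- `α ∈ ℝⁿ` is an irrational vector, i.e. `α ∉ ℚⁿ`. -/
def IsIrrationalVec (n : ℕ) (α : Fin n → ℝ) : Prop := ∀ v : Fin n → ℚ, α ≠ fun i => (v i : ℝ)

/-- The open Euclidean ball `B_t` of radius `t` centered at the origin. -/
def ball0 (n : ℕ) (t : ℝ) : Set (Fin n → ℝ) := {v | eNorm n v < t}
namespace Stmt12
open Matrix

variable {n : ℕ}

open Matrix

variable {n : ℕ}

lemma vecMul_SL_inj {R : Type*} [CommRing R] (g : Matrix.SpecialLinearGroup (Fin n) R) :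
    Function.Injective (fun y : Fin n → R => Matrix.vecMul y (g : Matrix (Fin n) (Fin n) R)) := by
  intro a b h
  have h2 := congrArg (fun y => Matrix.vecMul y ((g⁻¹ : Matrix.SpecialLinearGroup (Fin n) R) : Matrix (Fin n) (Fin n) R)) h
  simp only [Matrix.vecMul_vecMul, ← Matrix.SpecialLinearGroup.coe_mul, mul_inv_cancel,
    Matrix.SpecialLinearGroup.coe_one, Matrix.vecMul_one] at h2
  exact h2

lemma gcd_dvd_gcd_vecMul (v : Fin n → ℤ) (A : Matrix (Fin n) (Fin n) ℤ) :
    Finset.univ.gcd v ∣ Finset.univ.gcd (Matrix.vecMul v A) := by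
  refine Finset.dvd_gcd fun b _ => ?_
  show Finset.univ.gcd v ∣ Matrix.vecMul v A b
  rw [Matrix.vecMul, dotProduct]
  exact Finset.dvd_sum fun i _ => Dvd.dvd.mul_right (Finset.gcd_dvd (Finset.mem_univ i)) _

lemma gcd_vecMul_SLZ (v : Fin n → ℤ) (γ : SLZ n) :
    Finset.univ.gcd (Matrix.vecMul v (γ : Matrix (Fin n) (Fin n) ℤ)) = Finset.univ.gcd v := by
  have h1 := gcd_dvd_gcd_vecMul v (γ : Matrix (Fin n) (Fin n) ℤ)
  have h2 := gcd_dvd_gcd_vecMul (Matrix.vecMul v (γ : Matrix (Fin n) (Fin n) ℤ))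
    ((γ⁻¹ : SLZ n) : Matrix (Fin n) (Fin n) ℤ)
  rw [Matrix.vecMul_vecMul, ← Matrix.SpecialLinearGroup.coe_mul, mul_inv_cancel,
    Matrix.SpecialLinearGroup.coe_one, Matrix.vecMul_one] at h2
  have n1 : 0 ≤ Finset.univ.gcd v := by
    rw [← Finset.normalize_gcd, ← Int.abs_eq_normalize]; exact abs_nonneg _
  have n2 : 0 ≤ Finset.univ.gcd (Matrix.vecMul v (γ : Matrix (Fin n) (Fin n) ℤ)) := by
    rw [← Finset.normalize_gcd, ← Int.abs_eq_normalize]; exact abs_nonneg _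
  exact Int.dvd_antisymm n2 n1 h2 h1

lemma vecMul_transvection (v : Fin n → ℤ) (i j : Fin n) (c : ℤ) :
    Matrix.vecMul v (Matrix.transvection i j c) = Function.update v j (v j + v i * c) := by
  funext b
  rw [Matrix.transvection, Matrix.vecMul_add, Matrix.vecMul_one]
  rcases eq_or_ne b j with rfl | hb
  · simp [Matrix.vecMul, dotProduct, Matrix.single, Finset.sum_ite_eq',
      mul_comm]
  · simp [Matrix.vecMul, dotProduct, Matrix.single, Function.update_of_ne hb,
      hb.symm]



/-- transvection as an element of SL_n(ℤ) -/
def tv (i j : Fin n) (hij : i ≠ j) (c : ℤ) : SLZ n :=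
  ⟨Matrix.transvection i j c, Matrix.det_transvection_of_ne i j hij c⟩

lemma vecMul_tv (v : Fin n → ℤ) (i j : Fin n) (hij : i ≠ j) (c : ℤ) :
    Matrix.vecMul v ((tv i j hij c : SLZ n) : Matrix (Fin n) (Fin n) ℤ)
      = Function.update v j (v j + v i * c) :=
  vecMul_transvection v i j c

lemma en_apply_eq (b : Fin n) (hb : (b : ℕ) = n - 1) : en n b = 1 := by
  simp [en, hb]

lemma en_apply_ne (b : Fin n) (hb : (b : ℕ) ≠ n - 1) : en n b = 0 := by
  simp [en, hb]

lemma single_nonzero (hn : 2 ≤ n) (w : Fin n → ℤ) (i : Fin n) (hsq : w i * w i = 1)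
    (hz : ∀ j, j ≠ i → w j = 0) :
    ∃ γ : SLZ n, Matrix.vecMul w (γ : Matrix (Fin n) (Fin n) ℤ) = en n := by
  have hNlt : n - 1 < n := by omega
  by_cases hiN : (i : ℕ) = n - 1
  · by_cases h1 : w i = 1
    · refine ⟨1, ?_⟩
      rw [Matrix.SpecialLinearGroup.coe_one, Matrix.vecMul_one]
      funext b
      by_cases hb : b = i
      · rw [hb, h1, en_apply_eq i hiN]
      · rw [hz b hb, en_apply_ne b (fun hbv => hb (Fin.ext (by rw [hbv, ← hiN])))]
    · have h1' : w i = -1 := by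
        rcases Int.isUnit_iff.mp (IsUnit.of_mul_eq_one _ hsq) with h | h
        · exact absurd h h1
        · exact h
      have h0n : (0 : ℕ) < n := by omega
      have hj0i : (⟨0, h0n⟩ : Fin n) ≠ i := by
        intro h
        have : (0 : ℕ) = (i : ℕ) := congrArg Fin.val h
        omega
      set j0 : Fin n := ⟨0, h0n⟩ with hj0
      have hwj0 : w j0 = 0 := hz j0 hj0i
      have hj0N : (j0 : ℕ) ≠ n - 1 := by
        show (0 : ℕ) ≠ n - 1
        omega
      refine ⟨tv i j0 (Ne.symm hj0i) 1 * (tv j0 i hj0i (-2) * tv i j0 (Ne.symm hj0i) 1), ?_⟩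
      simp only [Matrix.SpecialLinearGroup.coe_mul, ← Matrix.vecMul_vecMul]
      rw [vecMul_tv, vecMul_tv, vecMul_tv]
      funext b
      have hij0 : i ≠ j0 := Ne.symm hj0i
      by_cases hb : b = j0
      · rw [hb, en_apply_ne j0 hj0N]
        simp only [Function.update_apply, if_pos rfl, if_neg hj0i, if_neg hij0, if_true,
          hwj0, h1']
        norm_num
      · by_cases hbi : b = i
        · rw [hbi, en_apply_eq i hiN]
          simp only [Function.update_apply, if_pos rfl, if_neg hij0, if_neg hj0i, if_true,
            hwj0, h1']
          norm_num
        · rw [en_apply_ne b (fun hbv => hbi (Fin.ext (by rw [hbv, ← hiN])))]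
          simp only [Function.update_apply, if_neg hb, if_neg hbi, hz b hbi]
  · -- i is not the last index
    have hiN1 : i ≠ (⟨n - 1, hNlt⟩ : Fin n) := by
      intro h
      exact hiN (congrArg Fin.val h)
    set N1 : Fin n := ⟨n - 1, hNlt⟩ with hN1
    have hwN1 : w N1 = 0 := hz N1 (Ne.symm hiN1)
    have hN1v : (N1 : ℕ) = n - 1 := rfl
    refine ⟨tv i N1 hiN1 (w i) * tv N1 i (Ne.symm hiN1) (-(w i)), ?_⟩
    simp only [Matrix.SpecialLinearGroup.coe_mul, ← Matrix.vecMul_vecMul]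
    rw [vecMul_tv, vecMul_tv]
    funext b
    have hN1i : N1 ≠ i := Ne.symm hiN1
    by_cases hb : b = N1
    · rw [hb, en_apply_eq N1 hN1v]
      simp only [Function.update_apply, if_pos rfl, if_neg hN1i, if_true]
      linear_combination hsq + hwN1
    · by_cases hbi : b = i
      · rw [hbi, en_apply_ne i hiN]
        simp only [Function.update_apply, if_pos rfl, if_neg hiN1, if_true]
        linear_combination (-(w i)) * hsq + (-(w i)) * hwN1
      · rw [en_apply_ne b (fun hbv => hb (Fin.ext (by rw [hbv, ← hN1v])))]
        simp only [Function.update_apply, if_neg hb, if_neg hbi, hz b hbi]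

lemma exists_SL_vecMul_eq_en_aux (hn : 2 ≤ n) :
    ∀ N : ℕ, ∀ w : Fin n → ℤ, (∑ i, (w i).natAbs) ≤ N → Finset.univ.gcd w = 1 →
    ∃ γ : SLZ n, Matrix.vecMul w (γ : Matrix (Fin n) (Fin n) ℤ) = en n := by
  intro N
  induction N with
  | zero =>
    intro w hw hgcd
    exfalso
    have hz : ∀ i, w i = 0 := by
      intro i
      have h1 : (w i).natAbs ≤ ∑ j, (w j).natAbs :=
        Finset.single_le_sum (f := fun j => (w j).natAbs) (fun _ _ => Nat.zero_le _)
          (Finset.mem_univ i)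
      omega
    rw [Finset.gcd_eq_zero_iff.mpr (fun i _ => hz i)] at hgcd
    exact absurd hgcd (by norm_num)
  | succ N ih =>
    intro w hw hgcd
    by_cases hpair : ∃ i j : Fin n, i ≠ j ∧ w i ≠ 0 ∧ w j ≠ 0 ∧ (w i).natAbs ≤ (w j).natAbs
    · obtain ⟨i, j, hij, hi, hj, hle⟩ := hpair
      set c : ℤ := -(Int.sign (w i)) * (w j / ((w i).natAbs : ℤ)) with hc
      have hms : w i * Int.sign (w i) = ((w i).natAbs : ℤ) := Int.mul_sign_self (w i)
      have hwj' : w j + w i * c = w j % ((w i).natAbs : ℤ) := by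
        calc w j + w i * c
            = w j - (w i * Int.sign (w i)) * (w j / ((w i).natAbs : ℤ)) := by rw [hc]; ring
          _ = w j - ((w i).natAbs : ℤ) * (w j / ((w i).natAbs : ℤ)) := by rw [hms]
          _ = w j % ((w i).natAbs : ℤ) := (Int.emod_def _ _).symm
      have habs : (0 : ℤ) < ((w i).natAbs : ℤ) := by
        have : (w i).natAbs ≠ 0 := fun h => hi (Int.natAbs_eq_zero.mp h)
        omega
      have hrlt : (w j + w i * c).natAbs < (w i).natAbs := by
        rw [hwj']
        have h1 : 0 ≤ w j % ((w i).natAbs : ℤ) := Int.emod_nonneg _ (ne_of_gt habs)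
        have h2 : w j % ((w i).natAbs : ℤ) < ((w i).natAbs : ℤ) :=
          Int.emod_lt_of_pos _ habs
        omega
      set w' : Fin n → ℤ := Function.update w j (w j + w i * c) with hw'
      have hsum' : (∑ i, (w' i).natAbs) ≤ N := by
        have h1 : (w' j).natAbs + ∑ b ∈ Finset.univ.erase j, (w' b).natAbs
            = ∑ b, (w' b).natAbs :=
          Finset.add_sum_erase Finset.univ (fun b => (w' b).natAbs) (Finset.mem_univ j)
        have h2 : (w j).natAbs + ∑ b ∈ Finset.univ.erase j, (w b).natAbs
            = ∑ b, (w b).natAbs :=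
          Finset.add_sum_erase Finset.univ (fun b => (w b).natAbs) (Finset.mem_univ j)
        have heq : ∑ b ∈ Finset.univ.erase j, (w' b).natAbs
            = ∑ b ∈ Finset.univ.erase j, (w b).natAbs := by
          refine Finset.sum_congr rfl fun b hb => ?_
          rw [hw', Function.update_of_ne (Finset.ne_of_mem_erase hb)]
        have h3 : (w' j).natAbs < (w j).natAbs := by
          rw [hw', Function.update_self]
          omega
        omega
      have hgcd' : Finset.univ.gcd w' = 1 := by
        have hcoe : w' = Matrix.vecMul w ((tv i j hij c : SLZ n) : Matrix (Fin n) (Fin n) ℤ) := by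
          rw [vecMul_tv]
        rw [hcoe, gcd_vecMul_SLZ, hgcd]
      obtain ⟨γ', hγ'⟩ := ih w' hsum' hgcd'
      refine ⟨tv i j hij c * γ', ?_⟩
      rw [Matrix.SpecialLinearGroup.coe_mul, ← Matrix.vecMul_vecMul, vecMul_tv, ← hw', hγ']
    · push_neg at hpair
      have hex : ∃ i, w i ≠ 0 := by
        by_contra h
        push_neg at h
        rw [Finset.gcd_eq_zero_iff.mpr (fun i _ => h i)] at hgcd
        exact absurd hgcd (by norm_num)
      obtain ⟨i, hi⟩ := hex
      have huniq : ∀ j, j ≠ i → w j = 0 := by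
        intro j hj
        by_contra hjne
        have h1 := hpair i j (fun h => hj (h.symm)) hi hjne
        have h2 := hpair j i hj hjne hi
        omega
      have hsq : w i * w i = 1 := by
        have hdvd : w i ∣ Finset.univ.gcd w := by
          refine Finset.dvd_gcd fun b _ => ?_
          rcases eq_or_ne b i with rfl | hb
          · exact dvd_rfl
          · rw [huniq b hb]; exact dvd_zero _
        rw [hgcd] at hdvd
        rcases Int.isUnit_iff.mp (isUnit_of_dvd_one hdvd) with h | h <;> rw [h] <;> ring
      exact single_nonzero hn w i hsq huniq

lemma exists_SL_en_vecMul (hn : 2 ≤ n) (w : Fin n → ℤ) (hgcd : Finset.univ.gcd w = 1) :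
    ∃ γ : SLZ n, Matrix.vecMul (en n) (γ : Matrix (Fin n) (Fin n) ℤ) = w := by
  obtain ⟨γ, hγ⟩ := exists_SL_vecMul_eq_en_aux hn _ w le_rfl hgcd
  refine ⟨γ⁻¹, ?_⟩
  rw [← hγ, Matrix.vecMul_vecMul, ← Matrix.SpecialLinearGroup.coe_mul, mul_inv_cancel,
    Matrix.SpecialLinearGroup.coe_one, Matrix.vecMul_one]



lemma gcd_en (hn : 1 ≤ n) : Finset.univ.gcd (en n) = 1 := by
  have hNlt : n - 1 < n := by omega
  have h1 : Finset.univ.gcd (en n) ∣ 1 := by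
    have := Finset.gcd_dvd (f := en n) (Finset.mem_univ (⟨n - 1, hNlt⟩ : Fin n))
    rwa [en_apply_eq _ rfl] at this
  have h2 : 0 ≤ Finset.univ.gcd (en n) := by
    rw [← Finset.normalize_gcd, ← Int.abs_eq_normalize]; exact abs_nonneg _
  exact Int.eq_one_of_dvd_one h2 h1

lemma coe_iM (q : ℕ) (B : SLZ n) :
    ((ιM n q B : Matrix.SpecialLinearGroup (Fin n) (ZMod q)) : Matrix (Fin n) (Fin n) (ZMod q))
      = (B : Matrix (Fin n) (Fin n) ℤ).map (Int.castRingHom (ZMod q)) := rfl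

lemma coe_iR (B : SLZ n) :
    ((ιR n B : SLR n) : Matrix (Fin n) (Fin n) ℝ)
      = (B : Matrix (Fin n) (Fin n) ℤ).map (Int.castRingHom ℝ) := rfl

lemma castM_vecMul (q : ℕ) (v : Fin n → ℤ) (B : SLZ n) :
    (fun i => ((Matrix.vecMul v (B : Matrix (Fin n) (Fin n) ℤ) i : ℤ) : ZMod q))
      = Matrix.vecMul (fun i => ((v i : ℤ) : ZMod q))
          ((ιM n q B : Matrix.SpecialLinearGroup (Fin n) (ZMod q)) :
            Matrix (Fin n) (Fin n) (ZMod q)) := by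
  funext i
  rw [coe_iM]
  exact RingHom.map_vecMul (Int.castRingHom (ZMod q)) (B : Matrix (Fin n) (Fin n) ℤ) v i

lemma castR_vecMul (v : Fin n → ℤ) (B : SLZ n) :
    (fun i => ((Matrix.vecMul v (B : Matrix (Fin n) (Fin n) ℤ) i : ℤ) : ℝ))
      = Matrix.vecMul (fun i => ((v i : ℤ) : ℝ)) ((ιR n B : SLR n) : Matrix (Fin n) (Fin n) ℝ) := by
  funext i
  rw [coe_iR]
  exact RingHom.map_vecMul (Int.castRingHom ℝ) (B : Matrix (Fin n) (Fin n) ℤ) v i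

lemma castM_en (q : ℕ) : (fun i => ((en n i : ℤ) : ZMod q)) = enM n q := by
  funext i
  by_cases h : (i : ℕ) = n - 1 <;> simp [en, enM, h]

lemma cosetVec_rep (Γ : Subgroup (SLZ n))
    (c : Quotient (QuotientGroup.rightRel ((LZ n).subgroupOf Γ))) :
    ∃ γ : Γ, cosetVec n Γ c
      = Matrix.vecMul (en n) (((γ : Γ) : SLZ n) : Matrix (Fin n) (Fin n) ℤ) := by
  induction c using Quotient.inductionOn with
  | h γ => exact ⟨γ, rfl⟩

lemma cosetVec_inj (Γ : Subgroup (SLZ n)) : Function.Injective (cosetVec n Γ) := by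
  intro c₁ c₂ h
  induction c₁ using Quotient.inductionOn with
  | h a =>
  induction c₂ using Quotient.inductionOn with
  | h b =>
  have hab : Matrix.vecMul (en n) (((a : Γ) : SLZ n) : Matrix (Fin n) (Fin n) ℤ)
      = Matrix.vecMul (en n) (((b : Γ) : SLZ n) : Matrix (Fin n) (Fin n) ℤ) := h
  apply Quotient.sound
  have : (b * a⁻¹ : Γ) ∈ (LZ n).subgroupOf Γ → (QuotientGroup.rightRel ((LZ n).subgroupOf Γ)) a b :=
    fun hmem => QuotientGroup.rightRel_apply.mpr hmem
  apply this
  rw [Subgroup.mem_subgroupOf]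
  show Matrix.vecMul (en n) (((b * a⁻¹ : Γ) : SLZ n) : Matrix (Fin n) (Fin n) ℤ) = en n
  apply vecMul_SL_inj ((a : Γ) : SLZ n)
  show Matrix.vecMul (Matrix.vecMul (en n) (((b * a⁻¹ : Γ) : SLZ n) : Matrix (Fin n) (Fin n) ℤ))
      (((a : Γ) : SLZ n) : Matrix (Fin n) (Fin n) ℤ)
    = Matrix.vecMul (en n) (((a : Γ) : SLZ n) : Matrix (Fin n) (Fin n) ℤ)
  rw [Matrix.vecMul_vecMul, ← Matrix.SpecialLinearGroup.coe_mul]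
  have hmm : ((b * a⁻¹ : Γ) : SLZ n) * ((a : Γ) : SLZ n) = ((b : Γ) : SLZ n) := by
    rw [Subgroup.coe_mul, InvMemClass.coe_inv]
    group
  rw [hmm]
  exact hab.symm

lemma int_abs_le_finite (c : ℝ) : {m : ℤ | |(m : ℝ)| ≤ c}.Finite := by
  refine Set.Finite.subset (Set.finite_Icc (-⌈c⌉) ⌈c⌉) ?_
  intro m hm
  have hm' : |(m : ℝ)| ≤ c := hm
  have h1 : ((|m| : ℤ) : ℝ) ≤ (⌈c⌉ : ℝ) := by
    rw [Int.cast_abs]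
    exact hm'.trans (Int.le_ceil c)
  have h2 : |m| ≤ ⌈c⌉ := by exact_mod_cast h1
  rw [Set.mem_Icc]
  constructor
  · have := neg_abs_le m; omega
  · have := le_abs_self m; omega


end Stmt12

/-- Lemma 3.4 of the paper: the Siegel transform on `Y_{p/q}` as a sum of
twisted incomplete Eisenstein series. -/
theorem statement12 (n : ℕ) (hn : 2 ≤ n) (p : Fin n → ℤ) (q : ℕ) (hq : 0 < q)
    (hpq : Int.gcd (Finset.univ.gcd p) (q : ℤ) = 1)
    (r : ℤ) (hr : r = Finset.univ.gcd p) (γp : SLZ n)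
    (hγp : p = Matrix.vecMul (r • en n) ((γp : SLZ n) : Matrix (Fin n) (Fin n) ℤ))
    (f : (Fin n → ℝ) → ℂ) (hfm : Measurable f)
    (hfb : ∃ C : ℝ, ∀ x, ‖f x‖ ≤ C) (hfc : HasCompactSupport f)
    (T : ℕ → SLZ n)
    (hT : ∀ k : ℕ, 0 < k → Nat.Coprime k q →
      (k : ZMod q) • Matrix.vecMul (enM n q)
          ((ιM n q (T k) : Matrix.SpecialLinearGroup (Fin n) (ZMod q)) :
            Matrix (Fin n) (Fin n) (ZMod q))
        = ((r : ZMod q)) • enM n q) :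
    ∀ g : SLR n,
      Siegel n f (affLat n (fun i => (p i : ℝ) / (q : ℝ)) g)
        = ∑' k : {k : ℕ // 0 < k ∧ Nat.Coprime k q},
            Theta n (Gamma1 n q) (fun x => f (((k.1 : ℝ) / (q : ℝ)) • x))
              (ιR n (T k.1) * (ιR n γp * g)) ∧
      {k : {k : ℕ // 0 < k ∧ Nat.Coprime k q} |
        Theta n (Gamma1 n q) (fun x => f (((k.1 : ℝ) / (q : ℝ)) • x))
          (ιR n (T k.1) * (ιR n γp * g)) ≠ 0}.Finite := by
  intro g
  classical
  have hqR : (q : ℝ) ≠ 0 := Nat.cast_ne_zero.mpr hq.ne'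
  set α : Fin n → ℝ := fun i => (p i : ℝ) / (q : ℝ) with hα
  set K := {k : ℕ // 0 < k ∧ Nat.Coprime k q} with hK
  set gM : Matrix (Fin n) (Fin n) ℝ := (g : Matrix (Fin n) (Fin n) ℝ) with hgM
  set A : ℕ → SLZ n := fun k => T k * γp with hA
  set u : Quotient (QuotientGroup.rightRel ((LZ n).subgroupOf (Gamma1 n q))) → (Fin n → ℤ) :=
    cosetVec n (Gamma1 n q) with hu
  set w : (Σ _ : K, Quotient (QuotientGroup.rightRel ((LZ n).subgroupOf (Gamma1 n q)))) →
      (Fin n → ℤ) :=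
    fun ic => (ic.1.1 : ℤ) • Matrix.vecMul (u ic.2) ((A ic.1.1 : SLZ n) : Matrix (Fin n) (Fin n) ℤ)
    with hw
  set x : (Σ _ : K, Quotient (QuotientGroup.rightRel ((LZ n).subgroupOf (Gamma1 n q)))) →
      (Fin n → ℝ) :=
    fun ic => Matrix.vecMul (fun i => ((w ic i : ℝ)) / (q : ℝ)) gM with hx
  set F : (Σ _ : K, Quotient (QuotientGroup.rightRel ((LZ n).subgroupOf (Gamma1 n q)))) → ℂ :=
    fun ic => (fun y => f (((ic.1.1 : ℝ) / (q : ℝ)) • y))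
      (Matrix.vecMul (fun i => ((cosetVec n (Gamma1 n q) ic.2) i : ℝ))
        ((ιR n (T ic.1.1) * (ιR n γp * g) : SLR n) : Matrix (Fin n) (Fin n) ℝ)) with hF
  -- basic facts about coset vectors
  have hu_gcd : ∀ c, Finset.univ.gcd (u c) = 1 := by
    intro c
    obtain ⟨γ, hγ⟩ := Stmt12.cosetVec_rep (Gamma1 n q) c
    rw [hu, hγ, Stmt12.gcd_vecMul_SLZ, Stmt12.gcd_en (by omega)]
  have hu_mod : ∀ c, (fun i => ((u c i : ℤ) : ZMod q)) = enM n q := by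
    intro c
    obtain ⟨γ, hγ⟩ := Stmt12.cosetVec_rep (Gamma1 n q) c
    rw [hu, hγ, Stmt12.castM_vecMul q (en n) ((γ : Gamma1 n q) : SLZ n), Stmt12.castM_en]
    exact γ.2
  -- the mod-q computation of `en·T(k)·γp`
  have hTA : ∀ k : ℕ, 0 < k → Nat.Coprime k q →
      ((k : ℕ) : ZMod q) • Matrix.vecMul (enM n q)
        ((ιM n q (A k) : Matrix.SpecialLinearGroup (Fin n) (ZMod q)) :
          Matrix (Fin n) (Fin n) (ZMod q))
      = fun i => ((p i : ℤ) : ZMod q) := by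
    intro k hk hcop
    have h1 := hT k hk hcop
    have h2 : (fun i => ((p i : ℤ) : ZMod q))
        = (r : ZMod q) • Matrix.vecMul (enM n q)
            ((ιM n q γp : Matrix.SpecialLinearGroup (Fin n) (ZMod q)) :
              Matrix (Fin n) (Fin n) (ZMod q)) := by
      have h3 : (fun i => (((Matrix.vecMul (r • en n)
          ((γp : SLZ n) : Matrix (Fin n) (Fin n) ℤ)) i : ℤ) : ZMod q))
          = Matrix.vecMul (fun i => (((r • en n) i : ℤ) : ZMod q))
            ((ιM n q γp : Matrix.SpecialLinearGroup (Fin n) (ZMod q)) :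
              Matrix (Fin n) (Fin n) (ZMod q)) :=
        Stmt12.castM_vecMul q (r • en n) γp
      have h4 : (fun i => (((r • en n) i : ℤ) : ZMod q)) = (r : ZMod q) • enM n q := by
        funext i
        by_cases h : (i : ℕ) = n - 1 <;>
          simp [en, enM, h, Pi.smul_apply, smul_eq_mul]
      rw [hγp]
      rw [h3, h4, Matrix.smul_vecMul]
    rw [hA]
    rw [map_mul (ιM n q), Matrix.SpecialLinearGroup.coe_mul, ← Matrix.vecMul_vecMul,
      ← Matrix.smul_vecMul, h1, Matrix.smul_vecMul, h2]
  have hw_mod : ∀ ic, (fun i => ((w ic i : ℤ) : ZMod q)) = fun i => ((p i : ℤ) : ZMod q) := by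
    intro ⟨k, c⟩
    have h1 : (fun i => ((w ⟨k, c⟩ i : ℤ) : ZMod q))
        = ((k.1 : ℕ) : ZMod q) •
            (fun i => (((Matrix.vecMul (u c) ((A k.1 : SLZ n) : Matrix (Fin n) (Fin n) ℤ)) i : ℤ)
              : ZMod q)) := by
      funext i
      show (((k.1 : ℤ) • Matrix.vecMul (u c) ((A k.1 : SLZ n) : Matrix (Fin n) (Fin n) ℤ)) i
        : ZMod q) = _
      push_cast [Pi.smul_apply, smul_eq_mul]
      ring
    rw [h1, Stmt12.castM_vecMul q (u c) (A k.1), hu_mod c]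
    exact hTA k.1 k.2.1 k.2.2
  have hw_dvd : ∀ ic i, (q : ℤ) ∣ w ic i - p i := by
    intro ic i
    have := congrFun (hw_mod ic) i
    rwa [← sub_eq_zero, ← Int.cast_sub, ZMod.intCast_zmod_eq_zero_iff_dvd] at this
  have hw_gcd : ∀ ic, Finset.univ.gcd (w ic) = (ic.1.1 : ℤ) := by
    intro ⟨k, c⟩
    have h1 : Finset.univ.gcd (Matrix.vecMul (u c)
        ((A k.1 : SLZ n) : Matrix (Fin n) (Fin n) ℤ)) = 1 := by
      rw [Stmt12.gcd_vecMul_SLZ, hu_gcd]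
    have h2 : w ⟨k, c⟩ = fun i => (k.1 : ℤ) *
        (Matrix.vecMul (u c) ((A k.1 : SLZ n) : Matrix (Fin n) (Fin n) ℤ)) i := by
      funext i
      simp [hw, Pi.smul_apply, smul_eq_mul]
    rw [h2, Finset.gcd_mul_left, h1, mul_one, Int.normalize_of_nonneg (by positivity)]
  have hw_ne : ∀ ic, w ic ≠ 0 := by
    intro ic hzero
    have h1 := hw_gcd ic
    rw [Finset.gcd_eq_zero_iff.mpr (fun i _ => congrFun hzero i)] at h1
    have := ic.1.2.1
    omega
  -- x ic is the lattice point corresponding to F ic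
  have hxF : ∀ ic, F ic = f (x ic) := by
    intro ⟨k, c⟩
    show f (((k.1 : ℝ) / (q : ℝ)) • Matrix.vecMul (fun i => ((u c) i : ℝ))
      ((ιR n (T k.1) * (ιR n γp * g) : SLR n) : Matrix (Fin n) (Fin n) ℝ)) = f (x ⟨k, c⟩)
    congr 1
    have hco : ((ιR n (T k.1) * (ιR n γp * g) : SLR n) : Matrix (Fin n) (Fin n) ℝ)
        = ((ιR n (A k.1) : SLR n) : Matrix (Fin n) (Fin n) ℝ) * gM := by
      rw [hA]
      show ((ιR n (T k.1) * (ιR n γp * g) : SLR n) : Matrix (Fin n) (Fin n) ℝ)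
        = ((ιR n (T k.1 * γp) : SLR n) : Matrix (Fin n) (Fin n) ℝ) * gM
      rw [map_mul (ιR n)]
      simp only [Matrix.SpecialLinearGroup.coe_mul, hgM, Matrix.mul_assoc]
    rw [hco, ← Matrix.vecMul_vecMul]
    rw [← Stmt12.castR_vecMul (u c) (A k.1)]
    rw [hx]
    show ((k.1 : ℝ) / (q : ℝ)) • Matrix.vecMul
        (fun i => (((Matrix.vecMul (u c) ((A k.1 : SLZ n) : Matrix (Fin n) (Fin n) ℤ)) i : ℤ) : ℝ))
        gM
      = Matrix.vecMul (fun i => ((w ⟨k, c⟩ i : ℝ)) / (q : ℝ)) gM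
    rw [← Matrix.smul_vecMul]
    have hvec : (((k.1 : ℝ) / (q : ℝ)) • fun i =>
        (((Matrix.vecMul (u c) ((A k.1 : SLZ n) : Matrix (Fin n) (Fin n) ℤ)) i : ℤ) : ℝ))
        = fun i => ((w ⟨k, c⟩ i : ℝ)) / (q : ℝ) := by
      funext i
      show ((k.1 : ℝ) / (q : ℝ)) *
          (((Matrix.vecMul (u c) ((A k.1 : SLZ n) : Matrix (Fin n) (Fin n) ℤ)) i : ℤ) : ℝ)
        = ((w ⟨k, c⟩ i : ℝ)) / (q : ℝ)
      have hwi : w ⟨k, c⟩ i = (k.1 : ℤ) *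
          (Matrix.vecMul (u c) ((A k.1 : SLZ n) : Matrix (Fin n) (Fin n) ℤ)) i := by
        simp [hw, Pi.smul_apply, smul_eq_mul]
      rw [hwi]
      push_cast
      ring
    rw [hvec]
  -- the map Φ into the lattice subtype
  have hmem : ∀ ic, x ic ∈ affLat n α g ∧ x ic ≠ 0 := by
    intro ic
    constructor
    · refine ⟨fun i => (w ic i - p i) / (q : ℤ), ?_⟩
      have hvec : (fun i => ((((w ic i - p i) / (q : ℤ) : ℤ)) : ℝ) + α i)
          = fun i => ((w ic i : ℝ)) / (q : ℝ) := by
        funext i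
        have hdvd := hw_dvd ic i
        have hcan : (q : ℤ) * ((w ic i - p i) / (q : ℤ)) = w ic i - p i :=
          Int.mul_ediv_cancel' hdvd
        have hcanR : (q : ℝ) * (((w ic i - p i) / (q : ℤ) : ℤ) : ℝ)
            = (w ic i : ℝ) - (p i : ℝ) := by
          exact_mod_cast congrArg (fun z : ℤ => (z : ℝ)) hcan
        rw [hα]
        field_simp
        linarith [hcanR]
      show x ic = Matrix.vecMul
        (fun i => ((((w ic i - p i) / (q : ℤ) : ℤ)) : ℝ) + α i) ((g : SLR n) : Matrix (Fin n) (Fin n) ℝ)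
      rw [hvec]
    · intro hzero
      apply hw_ne ic
      have h1 : (fun i => ((w ic i : ℝ)) / (q : ℝ)) = (0 : Fin n → ℝ) := by
        apply Stmt12.vecMul_SL_inj g
        show Matrix.vecMul (fun i => ((w ic i : ℝ)) / (q : ℝ)) ((g : SLR n) : Matrix (Fin n) (Fin n) ℝ)
          = Matrix.vecMul (0 : Fin n → ℝ) ((g : SLR n) : Matrix (Fin n) (Fin n) ℝ)
        rw [Matrix.zero_vecMul]
        exact hzero
      funext i
      have h2 := congrFun h1 i
      field_simp at h2
      simpa using h2
  set Φ : (Σ _ : K, Quotient (QuotientGroup.rightRel ((LZ n).subgroupOf (Gamma1 n q)))) →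
      {y : Fin n → ℝ // y ∈ affLat n α g ∧ y ≠ 0} :=
    fun ic => ⟨x ic, hmem ic⟩ with hΦ
  have hΦinj : Function.Injective Φ := by
    intro ic1 ic2 h
    have hxeq : x ic1 = x ic2 := congrArg Subtype.val h
    have hweq : w ic1 = w ic2 := by
      have h1 : (fun i => ((w ic1 i : ℝ)) / (q : ℝ)) = fun i => ((w ic2 i : ℝ)) / (q : ℝ) :=
        Stmt12.vecMul_SL_inj g hxeq
      funext i
      have h2 := congrFun h1 i
      field_simp at h2
      exact_mod_cast h2
    obtain ⟨k1, c1⟩ := ic1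
    obtain ⟨k2, c2⟩ := ic2
    have hkeq : k1 = k2 := by
      have h1 := hw_gcd ⟨k1, c1⟩
      have h2 := hw_gcd ⟨k2, c2⟩
      rw [hweq] at h1
      rw [h1] at h2
      exact Subtype.ext (by exact_mod_cast h2)
    subst hkeq
    have hueq : u c1 = u c2 := by
      have h1 : (k1.1 : ℤ) • Matrix.vecMul (u c1) ((A k1.1 : SLZ n) : Matrix (Fin n) (Fin n) ℤ)
          = (k1.1 : ℤ) • Matrix.vecMul (u c2) ((A k1.1 : SLZ n) : Matrix (Fin n) (Fin n) ℤ) :=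
        hweq
      have hk0 : (k1.1 : ℤ) ≠ 0 := by
        have := k1.2.1
        omega
      have h2 := smul_right_injective (Fin n → ℤ) hk0 h1
      exact Stmt12.vecMul_SL_inj (A k1.1) h2
    have hceq : c1 = c2 := Stmt12.cosetVec_inj (Gamma1 n q) hueq
    rw [hceq]
  have hΦsurj : Function.Surjective Φ := by
    rintro ⟨xv, ⟨v, hv⟩, hne⟩
    set wI : Fin n → ℤ := fun i => (q : ℤ) * v i + p i with hwI
    have hxv : xv = Matrix.vecMul (fun i => ((wI i : ℝ)) / (q : ℝ)) gM := by
      have hvec : (fun i => (v i : ℝ) + α i) = fun i => ((wI i : ℝ)) / (q : ℝ) := by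
        funext i
        rw [hwI, hα]
        push_cast
        field_simp
      rw [hv, ← hvec]
    have hwne : wI ≠ 0 := by
      intro h0
      apply hne
      rw [hxv]
      have hvec0 : (fun i => ((wI i : ℝ)) / (q : ℝ)) = (0 : Fin n → ℝ) := by
        funext i
        rw [h0]
        simp
      rw [hvec0, Matrix.zero_vecMul]
    set d : ℤ := Finset.univ.gcd wI with hd
    have hd_nonneg : 0 ≤ d := by
      rw [hd, ← Finset.normalize_gcd, ← Int.abs_eq_normalize]; exact abs_nonneg _
    have hd_ne : d ≠ 0 := by
      intro h0
      apply hwne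
      funext i
      exact Finset.gcd_eq_zero_iff.mp (hd ▸ h0) i (Finset.mem_univ i)
    have hd_pos : 0 < d := lt_of_le_of_ne hd_nonneg (Ne.symm hd_ne)
    set k : ℕ := d.toNat with hk
    have hkd : (k : ℤ) = d := Int.toNat_of_nonneg hd_nonneg
    have hkpos : 0 < k := by omega
    -- coprimality of k and q
    have hcop : Nat.Coprime k q := by
      have h1 : ((Int.gcd d (q : ℤ) : ℕ) : ℤ) ∣ Finset.univ.gcd p := by
        refine Finset.dvd_gcd fun i _ => ?_
        have hdw : ((Int.gcd d (q : ℤ) : ℕ) : ℤ) ∣ wI i :=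
          dvd_trans (Int.gcd_dvd_left _ _) (hd ▸ Finset.gcd_dvd (Finset.mem_univ i))
        have hdq : ((Int.gcd d (q : ℤ) : ℕ) : ℤ) ∣ (q : ℤ) * v i :=
          Dvd.dvd.mul_right (Int.gcd_dvd_right _ _) _
        have : p i = wI i - (q : ℤ) * v i := by rw [hwI]; ring
        rw [this]
        exact dvd_sub hdw hdq
      have h2 : ((Int.gcd d (q : ℤ) : ℕ) : ℤ) ∣ (q : ℤ) := Int.gcd_dvd_right _ _
      have h3 : ((Int.gcd d (q : ℤ) : ℕ) : ℤ) ∣ ((Int.gcd (Finset.univ.gcd p) (q : ℤ) : ℕ) : ℤ) :=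
        by exact_mod_cast Int.dvd_gcd h1 h2
      rw [hpq] at h3
      have h4 : Int.gcd d (q : ℤ) = 1 := by
        have h5 := Int.eq_one_of_dvd_one (Int.natCast_nonneg _) (by exact_mod_cast h3)
        exact_mod_cast h5
      have h5 : Int.gcd (k : ℤ) (q : ℤ) = 1 := by rw [hkd]; exact h4
      rwa [Int.gcd_natCast_natCast] at h5
    set u' : Fin n → ℤ := fun i => wI i / d with hu'
    have hdu : ∀ i, d ∣ wI i := fun i => hd ▸ Finset.gcd_dvd (Finset.mem_univ i)
    have hwdu : ∀ i, d * u' i = wI i := fun i => Int.mul_ediv_cancel' (hdu i)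
    have hgcd_u' : Finset.univ.gcd u' = 1 := by
      have h1 : Finset.univ.gcd (fun i => d * u' i) = d * Finset.univ.gcd u' := by
        rw [Finset.gcd_mul_left, Int.normalize_of_nonneg hd_nonneg]
      have h2 : Finset.univ.gcd (fun i => d * u' i) = d := by
        have hwfun : (fun i => d * u' i) = wI := funext fun i => hwdu i
        rw [hwfun]
      refine mul_left_cancel₀ hd_ne ?_
      rw [← h1, h2, mul_one]
    -- mod q: u' = en·T(k)·γp
    have hkunit : IsUnit ((k : ℕ) : ZMod q) := (ZMod.isUnit_iff_coprime k q).mpr hcop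
    have hmod_u' : (fun i => ((u' i : ℤ) : ZMod q))
        = Matrix.vecMul (enM n q) ((ιM n q (A k) : Matrix.SpecialLinearGroup (Fin n) (ZMod q)) :
            Matrix (Fin n) (Fin n) (ZMod q)) := by
      have h1 : ((k : ℕ) : ZMod q) • (fun i => ((u' i : ℤ) : ZMod q))
          = ((k : ℕ) : ZMod q) • Matrix.vecMul (enM n q)
              ((ιM n q (A k) : Matrix.SpecialLinearGroup (Fin n) (ZMod q)) :
                Matrix (Fin n) (Fin n) (ZMod q)) := by
        rw [hTA k hkpos hcop]
        funext i
        show ((k : ℕ) : ZMod q) * ((u' i : ℤ) : ZMod q) = ((p i : ℤ) : ZMod q)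
        have h2 : ((wI i : ℤ) : ZMod q) = ((p i : ℤ) : ZMod q) := by
          rw [hwI]
          push_cast
          simp [ZMod.natCast_self]
        rw [← h2, ← hwdu i]
        push_cast [← hkd]
        ring
      funext i
      have h3 := congrFun h1 i
      simp only [Pi.smul_apply, smul_eq_mul] at h3
      exact hkunit.mul_left_cancel h3
    set uu : Fin n → ℤ :=
      Matrix.vecMul u' (((A k)⁻¹ : SLZ n) : Matrix (Fin n) (Fin n) ℤ) with huu
    have hgcd_uu : Finset.univ.gcd uu = 1 := by
      rw [huu, Stmt12.gcd_vecMul_SLZ, hgcd_u']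
    have huuA : Matrix.vecMul uu ((A k : SLZ n) : Matrix (Fin n) (Fin n) ℤ) = u' := by
      rw [huu, Matrix.vecMul_vecMul, ← Matrix.SpecialLinearGroup.coe_mul, inv_mul_cancel,
        Matrix.SpecialLinearGroup.coe_one, Matrix.vecMul_one]
    have hmod_uu : (fun i => ((uu i : ℤ) : ZMod q)) = enM n q := by
      rw [huu, Stmt12.castM_vecMul q u' ((A k)⁻¹), hmod_u', Matrix.vecMul_vecMul,
        ← Matrix.SpecialLinearGroup.coe_mul, ← map_mul (ιM n q), mul_inv_cancel, _root_.map_one,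
        Matrix.SpecialLinearGroup.coe_one, Matrix.vecMul_one]
    obtain ⟨γ0, hγ0⟩ := Stmt12.exists_SL_en_vecMul hn uu hgcd_uu
    have hγ0mem : γ0 ∈ Gamma1 n q := by
      show Matrix.vecMul (enM n q) ((ιM n q γ0 : Matrix.SpecialLinearGroup (Fin n) (ZMod q)) :
        Matrix (Fin n) (Fin n) (ZMod q)) = enM n q
      have h1 : (fun i => (((Matrix.vecMul (en n) ((γ0 : SLZ n) : Matrix (Fin n) (Fin n) ℤ)) i
          : ℤ) : ZMod q))
          = Matrix.vecMul (enM n q)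
            ((ιM n q γ0 : Matrix.SpecialLinearGroup (Fin n) (ZMod q)) :
              Matrix (Fin n) (Fin n) (ZMod q)) := by
        rw [Stmt12.castM_vecMul q (en n) γ0, Stmt12.castM_en]
      rw [← h1, hγ0]
      exact hmod_uu
    set c : Quotient (QuotientGroup.rightRel ((LZ n).subgroupOf (Gamma1 n q))) :=
      Quotient.mk _ (⟨γ0, hγ0mem⟩ : Gamma1 n q) with hc
    have huc : u c = uu := by
      rw [hu, hc]
      show Matrix.vecMul (en n) ((γ0 : SLZ n) : Matrix (Fin n) (Fin n) ℤ) = uu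
      exact hγ0
    refine ⟨⟨⟨k, hkpos, hcop⟩, c⟩, ?_⟩
    apply Subtype.ext
    have hwic : w ⟨⟨k, hkpos, hcop⟩, c⟩ = wI := by
      funext i
      show ((k : ℤ) • Matrix.vecMul (u c) ((A k : SLZ n) : Matrix (Fin n) (Fin n) ℤ)) i = wI i
      rw [huc, huuA]
      show (k : ℤ) * u' i = wI i
      rw [hkd]
      exact hwdu i
    show Matrix.vecMul (fun i => ((w ⟨⟨k, hkpos, hcop⟩, c⟩ i : ℝ)) / (q : ℝ)) gM = xv
    rw [hwic]
    exact hxv.symm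
  -- finiteness of the support
  have hgcont : Continuous (fun y : Fin n → ℝ =>
      Matrix.vecMul y ((g⁻¹ : SLR n) : Matrix (Fin n) (Fin n) ℝ)) := by
    apply continuous_pi
    intro j
    simp only [Matrix.vecMul, dotProduct]
    exact continuous_finset_sum _ fun i _ => (continuous_apply i).mul continuous_const
  have hKcomp : IsCompact ((fun y : Fin n → ℝ =>
      Matrix.vecMul y ((g⁻¹ : SLR n) : Matrix (Fin n) (Fin n) ℝ)) '' tsupport f) :=
    hfc.image hgcont
  obtain ⟨R, hR⟩ := hKcomp.isBounded.subset_closedBall (0 : Fin n → ℝ)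
  have hZfin : (affLat n α g ∩ tsupport f).Finite := by
    have hVfin : (Set.pi Set.univ
        (fun i => {m : ℤ | |(m : ℝ)| ≤ R + |α i|})).Finite :=
      Set.Finite.pi fun i => Stmt12.int_abs_le_finite _
    refine Set.Finite.subset (hVfin.image
      (fun v : Fin n → ℤ => Matrix.vecMul (fun i => (v i : ℝ) + α i) gM)) ?_
    rintro xv ⟨⟨v, hv⟩, hxK⟩
    refine ⟨v, ?_, hv.symm⟩
    intro i _
    show |(v i : ℝ)| ≤ R + |α i|
    have hy : (fun i => (v i : ℝ) + α i) = Matrix.vecMul xv ((g⁻¹ : SLR n) :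
        Matrix (Fin n) (Fin n) ℝ) := by
      rw [hv, Matrix.vecMul_vecMul, ← Matrix.SpecialLinearGroup.coe_mul, mul_inv_cancel,
        Matrix.SpecialLinearGroup.coe_one, Matrix.vecMul_one]
    have hmemB : Matrix.vecMul xv ((g⁻¹ : SLR n) : Matrix (Fin n) (Fin n) ℝ) ∈
        Metric.closedBall (0 : Fin n → ℝ) R := hR ⟨xv, hxK, rfl⟩
    rw [Metric.mem_closedBall, dist_zero_right] at hmemB
    have hnorm : ‖(fun i => (v i : ℝ) + α i) i‖ ≤ R := by
      rw [hy]
      exact (norm_le_pi_norm _ i).trans hmemB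
    rw [Real.norm_eq_abs] at hnorm
    calc |(v i : ℝ)| = |((v i : ℝ) + α i) - α i| := by ring_nf
      _ ≤ |(v i : ℝ) + α i| + |α i| := abs_sub _ _
      _ ≤ R + |α i| := by
          have : |(v i : ℝ) + α i| ≤ R := hnorm
          linarith
  have hSfin : {y : {y : Fin n → ℝ // y ∈ affLat n α g ∧ y ≠ 0} | f y.1 ≠ 0}.Finite := by
    apply Set.Finite.of_finite_image (f := Subtype.val)
    · refine Set.Finite.subset hZfin ?_
      rintro xv ⟨y, hy, rfl⟩
      exact ⟨y.2.1, subset_tsupport f hy⟩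
    · exact Subtype.val_injective.injOn
  have hsupp : (Function.support F).Finite := by
    refine Set.Finite.subset (hSfin.preimage hΦinj.injOn) ?_
    intro ic hic
    show Φ ic ∈ {y : {y : Fin n → ℝ // y ∈ affLat n α g ∧ y ≠ 0} | f y.1 ≠ 0}
    show f (Φ ic).1 ≠ 0
    show f (x ic) ≠ 0
    rw [← hxF ic]
    exact hic
  have hsum : Summable F := summable_of_finite_support hsupp
  -- the bijection and the tsum identity
  have hbij : Function.Bijective Φ := ⟨hΦinj, hΦsurj⟩
  have htsum1 : Siegel n f (affLat n α g) = ∑' ic, F ic := by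
    rw [Siegel]
    rw [← Equiv.tsum_eq (Equiv.ofBijective Φ hbij)
      (fun y : {y : Fin n → ℝ // y ∈ affLat n α g ∧ y ≠ 0} => f y.1)]
    exact tsum_congr fun ic => (hxF ic).symm
  have htheta : ∀ k : K, Theta n (Gamma1 n q) (fun y => f (((k.1 : ℝ) / (q : ℝ)) • y))
      (ιR n (T k.1) * (ιR n γp * g)) = ∑' c, F ⟨k, c⟩ := fun k => rfl
  constructor
  · rw [htsum1, hsum.tsum_sigma]
    exact tsum_congr fun k => (htheta k).symm
  · refine Set.Finite.subset (hsupp.image Sigma.fst) ?_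
    intro k hk
    have hk1 : Theta n (Gamma1 n q) (fun y => f (((k.1 : ℝ) / (q : ℝ)) • y))
        (ιR n (T k.1) * (ιR n γp * g)) ≠ 0 := hk
    rw [htheta k] at hk1
    by_contra hnot
    have hALL : ∀ c, F ⟨k, c⟩ = 0 := by
      intro c
      by_contra hc
      exact hnot ⟨⟨k, c⟩, hc, rfl⟩
    apply hk1
    have : (fun c => F ⟨k, c⟩) = fun _ => (0 : ℂ) := funext hALL
    rw [this]
    exact tsum_zero
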